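/- Let A, N, α, β ∈ ℕ with N ≥ 1 and β ≤ A; set a = A/2 and b = a + N. Then for all n, t ∈ {0, …, N−1}, with s = a + t, the two families of q-Racah polynomials are connected by: ũ_{N−1−n}^{α,β}(x(s),a,b)_q = (−1)^{t−n} · ([t+β]_q! [N+α−t−1]_q! [A+N+α+t]_q! [A+N−β−n−1]_q!) / ([A−β+t]_q! [α+n]_q! [β+n]_q! [A+N+α+n]_q!) · u_n^{α,β}(x(s),a,b)_q. -/

import Mathlib

open Finset

/-- The symmetric q-number `[s]_q = (q^{s/2} - q^{-s/2})/(q^{1/2} - q^{-1/2})`. -/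
noncomputable def qnum (q s : ℝ) : ℝ :=
  (q ^ (s / 2) - q ^ (-s / 2)) / (q ^ ((1 : ℝ) / 2) - q ^ (-(1 : ℝ) / 2))

/-- The symmetric q-factorial `[n]_q! = ∏_{m=1}^n [m]_q`. -/
noncomputable def qfact (q : ℝ) (n : ℕ) : ℝ :=
  ∏ m ∈ Finset.range n, qnum q ((m : ℝ) + 1)

/-- The symmetric q-Pochhammer symbol `(a|q)_k = ∏_{m=0}^{k-1} [a+m]_q`. -/
noncomputable def qpoch (q a : ℝ) (k : ℕ) : ℝ :=
  ∏ m ∈ Finset.range k, qnum q (a + (m : ℝ))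

/-- The q-Racah polynomial `u_n^{α,β}(x(s),a,b)_q` on the lattice `x(s)=[s]_q[s+1]_q`. -/
noncomputable def racahU (q a b α β : ℝ) (n : ℕ) (s : ℝ) : ℝ :=
  qpoch q (a - b + 1) n * qpoch q (β + 1) n * qpoch q (a + b + α + 1) n / qfact q n *
    ∑ k ∈ Finset.range (n + 1),
      qpoch q (-(n : ℝ)) k * qpoch q (α + β + (n : ℝ) + 1) k * qpoch q (a - s) k *
          qpoch q (a + s + 1) k /
        (qpoch q 1 k * qpoch q (a - b + 1) k * qpoch q (β + 1) k *
          qpoch q (a + b + α + 1) k)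

/-- The alternative q-Racah polynomial `ũ_n^{α,β}(x(s),a,b)_q`. -/
noncomputable def racahUt (q a b α β : ℝ) (n : ℕ) (s : ℝ) : ℝ :=
  qpoch q (a - b + 1) n * qpoch q (2 * a - β + 1) n * qpoch q (a - b - α + 1) n / qfact q n *
    ∑ k ∈ Finset.range (n + 1),
      qpoch q (-(n : ℝ)) k * qpoch q (2 * a - 2 * b - α - β + (n : ℝ) + 1) k *
          qpoch q (a - s) k * qpoch q (a + s + 1) k /
        (qpoch q 1 k * qpoch q (a - b + 1) k * qpoch q (2 * a - β + 1) k *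
          qpoch q (a - b - α + 1) k)

/-- `σ(s) = [s-a]_q [s+b]_q [s+a-β]_q [b+α-s]_q`. -/
noncomputable def racahSigma (q a b α β s : ℝ) : ℝ :=
  qnum q (s - a) * qnum q (s + b) * qnum q (s + a - β) * qnum q (b + α - s)

/-- `σ(-s-1) = [s+a+1]_q [b-s-1]_q [s-a+β+1]_q [b+α+s+1]_q`. -/
noncomputable def racahSigmaM (q a b α β s : ℝ) : ℝ :=
  qnum q (s + a + 1) * qnum q (b - s - 1) * qnum q (s - a + β + 1) * qnum q (b + α + s + 1)

/-- `σ̃(s) = [s-a]_q [s+b]_q [s-a+β]_q [b+α+s]_q`. -/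
noncomputable def racahSigmaT (q a b α β s : ℝ) : ℝ :=
  qnum q (s - a) * qnum q (s + b) * qnum q (s - a + β) * qnum q (b + α + s)

/-- `σ̃(-s-1) = [s+a+1]_q [b-s-1]_q [s+a-β+1]_q [b+α-s-1]_q`. -/
noncomputable def racahSigmaTM (q a b α β s : ℝ) : ℝ :=
  qnum q (s + a + 1) * qnum q (b - s - 1) * qnum q (s + a - β + 1) * qnum q (b + α - s - 1)

/-- `τ_n(s)` for the q-Racah polynomials. -/
noncomputable def racahTau (q a b α β : ℝ) (n : ℕ) (s : ℝ) : ℝ :=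
  -qnum q (α + β + 2 * (n : ℝ) + 2) * qnum q (s + (n : ℝ) / 2) * qnum q (s + (n : ℝ) / 2 + 1) +
    qnum q (a + (n : ℝ) / 2 + 1) * qnum q (b - (n : ℝ) / 2 - 1) *
      qnum q (β + (n : ℝ) / 2 + 1 - a) * qnum q (b + α + (n : ℝ) / 2 + 1) -
    qnum q (a + (n : ℝ) / 2) * qnum q (b - (n : ℝ) / 2) * qnum q (β + (n : ℝ) / 2 - a) *
      qnum q (b + α + (n : ℝ) / 2)


lemma qnum_zero {q : ℝ} : qnum q 0 = 0 := by simp [qnum]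

lemma qnum_neg {q : ℝ} (s : ℝ) : qnum q (-s) = -qnum q s := by
  unfold qnum; rw [neg_neg]; ring

lemma qnum_pos {q : ℝ} (hq0 : 0 < q) (hq1 : q ≠ 1) {s : ℝ} (hs : 0 < s) : 0 < qnum q s := by
  unfold qnum
  rcases lt_or_gt_of_ne hq1 with h | h
  · apply div_pos_of_neg_of_neg
    · rw [sub_neg]
      exact Real.rpow_lt_rpow_of_exponent_gt hq0 h (by linarith)
    · rw [sub_neg]
      exact Real.rpow_lt_rpow_of_exponent_gt hq0 h (by norm_num)
  · apply div_pos
    · rw [sub_pos]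
      exact Real.rpow_lt_rpow_of_exponent_lt h (by linarith)
    · rw [sub_pos]
      exact Real.rpow_lt_rpow_of_exponent_lt h (by norm_num)

lemma qnum_ne_zero {q : ℝ} (hq0 : 0 < q) (hq1 : q ≠ 1) {s : ℝ} (hs : s ≠ 0) : qnum q s ≠ 0 := by
  rcases hs.lt_or_gt with h | h
  · have : 0 < qnum q (-s) := qnum_pos hq0 hq1 (by linarith)
    rw [qnum_neg] at this; intro h0; rw [h0] at this; simp at this
  · exact (qnum_pos hq0 hq1 h).ne'

section Poch
variable {q : ℝ}

lemma qpoch_zero (a : ℝ) : qpoch q a 0 = 1 := by simp [qpoch]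

lemma qpoch_succ (a : ℝ) (k : ℕ) : qpoch q a (k+1) = qpoch q a k * qnum q (a + k) :=
  Finset.prod_range_succ _ _

lemma qpoch_front (a : ℝ) (k : ℕ) : qpoch q a (k+1) = qnum q a * qpoch q (a+1) k := by
  induction k with
  | zero => simp [qpoch_succ, qpoch_zero]
  | succ k ih =>
    rw [qpoch_succ, ih, qpoch_succ, mul_assoc]
    congr 2
    push_cast; ring

lemma qpoch_add (a : ℝ) (j i : ℕ) : qpoch q a (j+i) = qpoch q a j * qpoch q (a + j) i := by
  unfold qpoch
  rw [Finset.prod_range_add]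
  congr 1
  apply Finset.prod_congr rfl
  intro m _
  congr 1
  push_cast; ring

lemma qpoch_rev (a : ℝ) (k : ℕ) : qpoch q a k = (-1)^k * qpoch q (1 - a - k) k := by
  induction k with
  | zero => simp [qpoch_zero]
  | succ k ih =>
    have h1 : (1 : ℝ) - a - (k+1 : ℕ) = -(a+k) := by push_cast; ring
    have h2 : (1 : ℝ) - a - (k+1 : ℕ) + 1 = 1 - a - k := by push_cast; ring
    conv_rhs => rw [qpoch_front, h2, h1, qnum_neg]
    rw [qpoch_succ, ih]
    ring

lemma qpoch_pos (hq0 : 0 < q) (hq1 : q ≠ 1) {a : ℝ} (ha : 0 < a) (k : ℕ) : 0 < qpoch q a k := by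
  apply Finset.prod_pos
  intro m _
  exact qnum_pos hq0 hq1 (by positivity)

lemma qfact_eq_qpoch (k : ℕ) : qfact q k = qpoch q 1 k := by
  unfold qfact qpoch
  exact Finset.prod_congr rfl fun m _ => by rw [add_comm]

lemma qfact_pos (hq0 : 0 < q) (hq1 : q ≠ 1) (k : ℕ) : 0 < qfact q k := by
  rw [qfact_eq_qpoch]; exact qpoch_pos hq0 hq1 one_pos k

lemma qfact_succ (k : ℕ) : qfact q (k+1) = qfact q k * qnum q (k+1) := by
  rw [qfact_eq_qpoch, qfact_eq_qpoch, qpoch_succ, add_comm (1:ℝ)]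

lemma qpoch_nat_zero {m k : ℕ} (h : m < k) : qpoch q (-(m:ℝ)) k = 0 := by
  apply Finset.prod_eq_zero (Finset.mem_range.mpr h)
  rw [show -(m:ℝ) + m = 0 by ring, qnum_zero]

lemma qfact_add (c k : ℕ) : qfact q (c+k) = qfact q c * qpoch q ((c:ℝ)+1) k := by
  unfold qfact qpoch
  rw [Finset.prod_range_add]
  congr 1
  apply Finset.prod_congr rfl
  intro m _
  congr 1
  push_cast; ring

lemma qpoch_negnat {k j : ℕ} (h : j ≤ k) :
    qpoch q (-(k:ℝ)) j * qfact q (k-j) = (-1)^j * qfact q k := by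
  rw [qpoch_rev]
  have h1 : (1:ℝ) - (-(k:ℝ)) - j = ((k-j : ℕ) : ℝ) + 1 := by
    have := Nat.cast_sub (R := ℝ) h
    rw [this]; ring
  rw [h1, mul_assoc, mul_comm (qpoch _ _ _), ← qfact_add, Nat.sub_add_cancel h]

lemma Lq1 (a : ℝ) (k : ℕ) :
    qpoch q a k * qnum q (1-a) = qpoch q (a-1) k * qnum q (1-a-k) := by
  cases k with
  | zero => rw [qpoch_zero, qpoch_zero]; norm_num
  | succ k =>
    rw [qpoch_succ, qpoch_front, show a - 1 + 1 = a by ring]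
    have h1 : qnum q (1 - a) = -qnum q (a - 1) := by
      rw [show (1:ℝ) - a = -(a-1) by ring, qnum_neg]
    have h2 : qnum q (1 - a - (k+1 : ℕ)) = -qnum q (a + k) := by
      rw [show (1:ℝ) - a - (k+1:ℕ) = -(a + k) by push_cast; ring, qnum_neg]
    rw [h1, h2]; ring
end Poch

lemma cert1_core (X Y V N K O : ℝ) (hX : X ≠ 0) (hY : Y ≠ 0) (hV : V ≠ 0)
    (hN : N ≠ 0) (hK : K ≠ 0) (hO : O ≠ 0) :
    (N*O - (N*O)⁻¹) * (V*N - (V*N)⁻¹) * (X*Y*(N*V)⁻¹*K - (X*Y*(N*V)⁻¹*K)⁻¹)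
      + (V*N*X⁻¹ - (V*N*X⁻¹)⁻¹) * (V*N*Y⁻¹ - (V*N*Y⁻¹)⁻¹) * (N*O*K⁻¹ - (N*O*K⁻¹)⁻¹)
    = (N*O*K⁻¹ - (N*O*K⁻¹)⁻¹) * (X*K - (X*K)⁻¹) * (Y*K - (Y*K)⁻¹)
      + (K - K⁻¹) * (V*O⁻¹*K - (V*O⁻¹*K)⁻¹) * (X*Y*(N*V)⁻¹*K - (X*Y*(N*V)⁻¹*K)⁻¹) := by
  field_simp
  ring

lemma qnum_sh {q : ℝ} (hq0 : 0 < q) (s : ℝ) :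
    qnum q s = (q ^ (s/2) - (q ^ (s/2))⁻¹) * ((q ^ ((1:ℝ)/2) - (q ^ ((1:ℝ)/2))⁻¹))⁻¹ := by
  unfold qnum
  simp only [neg_div, Real.rpow_neg hq0.le]
  rw [div_eq_mul_inv]

lemma cert1 {q : ℝ} (hq0 : 0 < q) (hq1 : q ≠ 1) (x y v n k : ℝ) :
    qnum q (n+1) * qnum q (v+n) * qnum q (x+y-n-v+k)
      + qnum q (v-x+n) * qnum q (v-y+n) * qnum q (n+1-k)
    = qnum q (n+1-k) * qnum q (x+k) * qnum q (y+k)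
      + qnum q k * qnum q (v-1+k) * qnum q (x+y-n-v+k) := by
  simp only [qnum_sh hq0]
  set X := q ^ (x/2) with hXd
  set Y := q ^ (y/2) with hYd
  set V := q ^ (v/2) with hVd
  set Nn := q ^ (n/2) with hNd
  set K := q ^ (k/2) with hKd
  set O := q ^ ((1:ℝ)/2) with hOd
  have hX : X ≠ 0 := (Real.rpow_pos_of_pos hq0 _).ne'
  have hY : Y ≠ 0 := (Real.rpow_pos_of_pos hq0 _).ne'
  have hV : V ≠ 0 := (Real.rpow_pos_of_pos hq0 _).ne'
  have hN : Nn ≠ 0 := (Real.rpow_pos_of_pos hq0 _).ne'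
  have hK : K ≠ 0 := (Real.rpow_pos_of_pos hq0 _).ne'
  have hO : O ≠ 0 := (Real.rpow_pos_of_pos hq0 _).ne'
  have e1 : q ^ ((n+1)/2) = Nn * O := by
    rw [hNd, hOd, ← Real.rpow_add hq0]; congr 1; ring
  have e2 : q ^ ((v+n)/2) = V * Nn := by
    rw [hVd, hNd, ← Real.rpow_add hq0]; congr 1; ring
  have e3 : q ^ ((x+y-n-v+k)/2) = X*Y*(Nn*V)⁻¹*K := by
    rw [hXd, hYd, hNd, hVd, hKd]
    simp only [← Real.rpow_add hq0, ← Real.rpow_neg hq0.le, ← Real.rpow_add hq0]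
    congr 1; ring
  have e4 : q ^ ((v-x+n)/2) = V*Nn*X⁻¹ := by
    rw [hXd, hVd, hNd]
    simp only [← Real.rpow_add hq0, ← Real.rpow_neg hq0.le, ← Real.rpow_add hq0]
    congr 1; ring
  have e5 : q ^ ((v-y+n)/2) = V*Nn*Y⁻¹ := by
    rw [hYd, hVd, hNd]
    simp only [← Real.rpow_add hq0, ← Real.rpow_neg hq0.le, ← Real.rpow_add hq0]
    congr 1; ring
  have e6 : q ^ ((n+1-k)/2) = Nn*O*K⁻¹ := by
    rw [hNd, hOd, hKd]
    simp only [← Real.rpow_add hq0, ← Real.rpow_neg hq0.le, ← Real.rpow_add hq0]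
    congr 1; ring
  have e7 : q ^ ((x+k)/2) = X*K := by
    rw [hXd, hKd, ← Real.rpow_add hq0]; congr 1; ring
  have e8 : q ^ ((y+k)/2) = Y*K := by
    rw [hYd, hKd, ← Real.rpow_add hq0]; congr 1; ring
  have e10 : q ^ ((v-1+k)/2) = V*O⁻¹*K := by
    rw [hVd, hOd, hKd]
    simp only [← Real.rpow_add hq0, ← Real.rpow_neg hq0.le, ← Real.rpow_add hq0]
    congr 1; ring
  rw [e1, e2, e3, e4, e5, e6, e7, e8, e10]
  linear_combination ((O - O⁻¹)⁻¹)^3 * cert1_core X Y V Nn K O hX hY hV hN hK hO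

theorem qPS {q : ℝ} (hq0 : 0 < q) (hq1 : q ≠ 1) (n : ℕ) (x y v : ℝ) :
    ∑ k ∈ Finset.range (n+1),
      qpoch q (-(n:ℝ)) k * qpoch q x k * qpoch q y k * qpoch q (v + k) (n - k)
        * qpoch q (x + y - n + 1 - v + k) (n - k) / qfact q k
    = (-1)^n * (qpoch q (v-x) n * qpoch q (v-y) n) := by
  induction n with
  | zero =>
    simp [qpoch_zero, qfact_eq_qpoch]
  | succ n ih =>
    have hQ1 : qnum q ((n:ℝ)+1) ≠ 0 := qnum_ne_zero hq0 hq1 (by positivity)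
    set g : ℕ → ℝ := fun k =>
      -(qnum q (k:ℝ) * qpoch q (-(n:ℝ)-1) k * qpoch q x k * qpoch q y k
        * qpoch q (v-1+k) (n+1-k) * qpoch q (x+y-n-v+k) (n+1-k))
        / (qfact q k * qnum q ((n:ℝ)+1)) with hg
    have hg0 : g 0 = 0 := by
      simp only [hg]; simp [qnum_zero]
    have hgend : g (n+1+1) = 0 := by
      have h0 : qpoch q (-(n:ℝ)-1) (n+1+1) = 0 := by
        rw [show -(n:ℝ)-1 = -(((n+1:ℕ)):ℝ) by push_cast; ring]
        exact qpoch_nat_zero (Nat.lt_succ_self (n+1))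
      simp only [hg, h0]; ring
    have key : ∀ k ∈ Finset.range (n+2),
        qpoch q (-((n+1:ℕ):ℝ)) k * qpoch q x k * qpoch q y k
          * qpoch q (v + k) (n+1 - k) * qpoch q (x + y - (n+1:ℕ) + 1 - v + k) (n+1 - k)
          / qfact q k
        = (g (k+1) - g k)
          - qnum q (v-x+n) * qnum q (v-y+n) *
            (qpoch q (-(n:ℝ)) k * qpoch q x k * qpoch q y k * qpoch q (v + k) (n - k)
              * qpoch q (x + y - n + 1 - v + k) (n - k) / qfact q k) := by
      intro k hk
      have hkn2 : k < n+2 := Finset.mem_range.mp hk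
      have hF : qfact q k ≠ 0 := (qfact_pos hq0 hq1 k).ne'
      rcases Nat.lt_or_ge k (n+1) with hkn | hke
      · -- main case : k ≤ n
        have hkn' : k ≤ n := by omega
        -- abbreviations
        set P1 := qpoch q (-(n:ℝ)-1) k with hP1d
        set Xk := qpoch q x k with hXkd
        set Yk := qpoch q y k with hYkd
        set A := qpoch q (v + (k:ℝ)) (n-k) with hAd
        set B := qpoch q (x + y - (n:ℝ) + 1 - v + k) (n-k) with hBd
        set F := qfact q k with hFd
        have hP0 : qpoch q (-(n:ℝ)) k
            = P1 * qnum q ((n:ℝ)+1-k) / qnum q ((n:ℝ)+1) := by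
          have h := Lq1 (q := q) (-(n:ℝ)) k
          rw [show (1:ℝ) - -(n:ℝ) = (n:ℝ)+1 by ring] at h
          rw [eq_div_iff hQ1, hP1d]
          exact h
        have e1 : qpoch q (-((n+1:ℕ):ℝ)) k * qpoch q x k * qpoch q y k
              * qpoch q (v + k) (n+1 - k) * qpoch q (x + y - (n+1:ℕ) + 1 - v + k) (n+1 - k)
              / qfact q k
            = qnum q ((n:ℝ)+1) * qnum q (v + n) * qnum q (x+y-(n:ℝ)-v+k)
                * (P1 * Xk * Yk * A * B) / (F * qnum q ((n:ℝ)+1)) := by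
          rw [show -(((n+1:ℕ)):ℝ) = -(n:ℝ)-1 by push_cast; ring]
          rw [show n+1-k = (n-k)+1 from by omega]
          rw [qpoch_succ (v + (k:ℝ)) (n-k)]
          rw [show v + (k:ℝ) + ((n-k:ℕ):ℝ) = v + n by
            rw [Nat.cast_sub hkn']; ring]
          rw [qpoch_front (x + y - ((n+1:ℕ):ℝ) + 1 - v + k) (n-k)]
          rw [show x + y - ((n+1:ℕ):ℝ) + 1 - v + (k:ℝ) = x+y-(n:ℝ)-v+k by push_cast; ring]
          rw [show x+y-(n:ℝ)-v+(k:ℝ)+1 = x + y - (n:ℝ) + 1 - v + k by ring]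
          rw [← hP1d, ← hXkd, ← hYkd, ← hAd, ← hBd, ← hFd]
          field_simp
        have e2 : g (k+1)
            = qnum q ((n:ℝ)+1-k) * qnum q (x+k) * qnum q (y+k) * (P1 * Xk * Yk * A * B)
              / (F * qnum q ((n:ℝ)+1)) := by
          simp only [hg]
          rw [qpoch_succ (-(n:ℝ)-1) k, qpoch_succ x k, qpoch_succ y k]
          rw [show -(n:ℝ)-1+(k:ℝ) = -((n:ℝ)+1-k) by ring, qnum_neg]
          rw [show n+1-(k+1) = n-k from by omega]
          rw [show v - 1 + ((k+1:ℕ):ℝ) = v + k by push_cast; ring]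
          rw [show x + y - (n:ℝ) - v + ((k+1:ℕ):ℝ) = x + y - (n:ℝ) + 1 - v + k by push_cast; ring]
          rw [qfact_succ k]
          rw [show ((k+1:ℕ):ℝ) = (k:ℝ)+1 by push_cast; ring]
          have hk1 : qnum q ((k:ℝ)+1) ≠ 0 := qnum_ne_zero hq0 hq1 (by positivity)
          rw [← hP1d, ← hXkd, ← hYkd, ← hAd, ← hBd, ← hFd]
          field_simp
        have e3 : g k
            = -(qnum q (k:ℝ) * qnum q (v-1+k) * qnum q (x+y-(n:ℝ)-v+k) * (P1 * Xk * Yk * A * B))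
              / (F * qnum q ((n:ℝ)+1)) := by
          simp only [hg]
          rw [show n+1-k = (n-k)+1 from by omega]
          rw [qpoch_front (v - 1 + (k:ℝ)) (n-k)]
          rw [show v - 1 + (k:ℝ) + 1 = v + k by ring]
          rw [qpoch_front (x + y - (n:ℝ) - v + (k:ℝ)) (n-k)]
          rw [show x + y - (n:ℝ) - v + (k:ℝ) + 1 = x + y - (n:ℝ) + 1 - v + k by ring]
          rw [← hP1d, ← hXkd, ← hYkd, ← hAd, ← hBd, ← hFd]
          ring
        have e4 : qnum q (v-x+n) * qnum q (v-y+n) *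
              (qpoch q (-(n:ℝ)) k * qpoch q x k * qpoch q y k * qpoch q (v + k) (n - k)
                * qpoch q (x + y - n + 1 - v + k) (n - k) / qfact q k)
            = qnum q (v-x+n) * qnum q (v-y+n) * qnum q ((n:ℝ)+1-k) * (P1 * Xk * Yk * A * B)
              / (F * qnum q ((n:ℝ)+1)) := by
          rw [hP0, ← hXkd, ← hYkd, ← hAd, ← hBd, ← hFd]
          ring
        rw [e1, e2, e3, e4]
        rw [div_sub_div_same, div_sub_div_same]
        congr 1
        linear_combination (P1 * Xk * Yk * A * B) * cert1 hq0 hq1 x y v (n:ℝ) (k:ℝ)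
      · -- boundary case : k = n+1
        have hke' : k = n+1 := by omega
        subst hke'
        rw [hgend]
        simp only [Nat.sub_self, qpoch_zero, hg]
        rw [qpoch_nat_zero (Nat.lt_succ_self n)]
        rw [show -(((n+1:ℕ)):ℝ) = -(n:ℝ)-1 by push_cast; ring]
        have hF1 : qfact q (n+1) ≠ 0 := (qfact_pos hq0 hq1 (n+1)).ne'
        rw [show ((n+1:ℕ):ℝ) = (n:ℝ)+1 by push_cast; ring]
        field_simp
        ring
    rw [Finset.sum_congr rfl key]
    rw [Finset.sum_sub_distrib, Finset.sum_range_sub (f := g)]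
    rw [← Finset.mul_sum]
    rw [Finset.sum_range_succ]
    have hzero1 : qpoch q (-(n:ℝ)) (n+1) * qpoch q x (n+1) * qpoch q y (n+1)
        * qpoch q (v + (n+1:ℕ)) (n - (n+1)) * qpoch q (x + y - n + 1 - v + (n+1:ℕ)) (n - (n+1))
        / qfact q (n+1) = 0 := by
      rw [qpoch_nat_zero (Nat.lt_succ_self n)]; ring
    rw [hzero1, add_zero, ih]
    rw [hg0, show n+2 = n+1+1 from rfl, hgend]
    rw [qpoch_succ, qpoch_succ]
    push_cast
    ring

lemma sum_swap_tri {M : Type*} [AddCommMonoid M] (m : ℕ) (G : ℕ → ℕ → M) :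
    ∑ k ∈ Finset.range m, ∑ j ∈ Finset.range (k+1), G k j
    = ∑ j ∈ Finset.range m, ∑ i ∈ Finset.range (m-j), G (j+i) j := by
  induction m with
  | zero => simp
  | succ m ih =>
    rw [Finset.sum_range_succ, ih]
    have h1 : ∀ j ∈ Finset.range (m+1),
        ∑ i ∈ Finset.range (m+1-j), G (j+i) j
        = ∑ i ∈ Finset.range (m-j), G (j+i) j + G m j := by
      intro j hj
      have hj' : j ≤ m := Nat.lt_succ_iff.mp (Finset.mem_range.mp hj)
      rw [show m+1-j = (m-j)+1 from by omega, Finset.sum_range_succ,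
        show j + (m-j) = m from by omega]
    rw [Finset.sum_congr rfl h1, Finset.sum_add_distrib]
    congr 1
    rw [Finset.sum_range_succ, show m - m = 0 from by omega]
    simp

theorem qSears {q : ℝ} (hq0 : 0 < q) (hq1 : q ≠ 1) (t : ℕ) (u1 u2 u3 v1 v2 : ℝ) :
    ∑ k ∈ Finset.range (t+1),
      qpoch q (-(t:ℝ)) k * qpoch q u1 k * qpoch q u2 k * qpoch q u3 k
        * qpoch q (v1+k) (t-k) * qpoch q (v2+k) (t-k)
        * qpoch q (u1+u2+u3+1-t-v1-v2+k) (t-k) / qfact q k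
    = ∑ k ∈ Finset.range (t+1),
      qpoch q (-(t:ℝ)) k * qpoch q u1 k * qpoch q (v1-u2) k * qpoch q (v1-u3) k
        * qpoch q (v1+k) (t-k) * qpoch q (u1+1-t-v2+k) (t-k)
        * qpoch q (v1+v2-u2-u3+k) (t-k) / qfact q k := by
  -- G k j : the double-sum summand
  set G : ℕ → ℕ → ℝ := fun k j =>
    (qpoch q (-(t:ℝ)) k * qpoch q u1 k * qpoch q (v1+k) (t-k)
      * qpoch q (u1+1-t-v2+k) (t-k) * qpoch q (v1+v2-u2-u3+k) (t-k) / qfact q k)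
    * ((-1)^k * (qpoch q (-(k:ℝ)) j * qpoch q u2 j * qpoch q u3 j
        * qpoch q (v1+j) (k-j) * qpoch q (u2+u3-(k:ℝ)+1-v1+j) (k-j) / qfact q j)) with hG
  have stage2 : ∀ k ∈ Finset.range (t+1),
      qpoch q (-(t:ℝ)) k * qpoch q u1 k * qpoch q (v1-u2) k * qpoch q (v1-u3) k
        * qpoch q (v1+k) (t-k) * qpoch q (u1+1-t-v2+k) (t-k)
        * qpoch q (v1+v2-u2-u3+k) (t-k) / qfact q k
      = ∑ j ∈ Finset.range (k+1), G k j := by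
    intro k hk
    have h := qPS hq0 hq1 k u2 u3 v1
    have hIns : qpoch q (v1-u2) k * qpoch q (v1-u3) k
        = (-1)^k * ∑ j ∈ Finset.range (k+1),
            qpoch q (-(k:ℝ)) j * qpoch q u2 j * qpoch q u3 j
              * qpoch q (v1+j) (k-j) * qpoch q (u2+u3-(k:ℝ)+1-v1+j) (k-j) / qfact q j := by
      rw [h, ← mul_assoc, show ((-1:ℝ))^k * (-1)^k = 1 by
        rw [← pow_add, ← two_mul, pow_mul]; norm_num, one_mul]
    calc qpoch q (-(t:ℝ)) k * qpoch q u1 k * qpoch q (v1-u2) k * qpoch q (v1-u3) k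
        * qpoch q (v1+k) (t-k) * qpoch q (u1+1-t-v2+k) (t-k)
        * qpoch q (v1+v2-u2-u3+k) (t-k) / qfact q k
        = (qpoch q (-(t:ℝ)) k * qpoch q u1 k * qpoch q (v1+k) (t-k)
            * qpoch q (u1+1-t-v2+k) (t-k) * qpoch q (v1+v2-u2-u3+k) (t-k) / qfact q k)
          * (qpoch q (v1-u2) k * qpoch q (v1-u3) k) := by ring
      _ = ∑ j ∈ Finset.range (k+1), G k j := by
          rw [hIns, Finset.mul_sum, Finset.mul_sum]
  rw [Finset.sum_congr rfl stage2, sum_swap_tri (t+1) G]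
  apply Finset.sum_congr rfl
  intro j hj
  have hjt : j ≤ t := Nat.lt_succ_iff.mp (Finset.mem_range.mp hj)
  have hFj : qfact q j ≠ 0 := (qfact_pos hq0 hq1 j).ne'
  rw [show t+1-j = (t-j)+1 from by omega]
  have key_i : ∀ i ∈ Finset.range ((t-j)+1), G (j+i) j =
      (qpoch q (-(t:ℝ)) j * qpoch q u1 j * qpoch q u2 j * qpoch q u3 j
        * qpoch q (v1+(j:ℝ)) (t-j) / qfact q j)
      * (qpoch q (-(((t-j):ℕ):ℝ)) i * qpoch q (u1+(j:ℝ)) i * qpoch q (v1-u2-u3) i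
        * qpoch q ((u1+1-(t:ℝ)-v2+(j:ℝ)) + i) ((t-j)-i)
        * qpoch q ((u1+(j:ℝ)) + (v1-u2-u3) - ((t-j:ℕ):ℝ) + 1 - (u1+1-(t:ℝ)-v2+(j:ℝ)) + i)
            ((t-j)-i)
        / qfact q i) := by
    intro i hi
    have hit : i ≤ t-j := Nat.lt_succ_iff.mp (Finset.mem_range.mp hi)
    have hFi : qfact q i ≠ 0 := (qfact_pos hq0 hq1 i).ne'
    have hFji : qfact q (j+i) ≠ 0 := (qfact_pos hq0 hq1 (j+i)).ne'
    simp only [hG]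
    rw [show t-(j+i) = (t-j)-i from by omega]
    rw [Nat.add_sub_cancel_left]
    rw [qpoch_add (-(t:ℝ)) j i, qpoch_add u1 j i]
    have hneg : qpoch q (-((j+i:ℕ):ℝ)) j = (-1)^j * qfact q (j+i) / qfact q i := by
      rw [eq_div_iff hFi]
      have h := qpoch_negnat (q := q) (Nat.le_add_right j i)
      rwa [Nat.add_sub_cancel_left] at h
    rw [hneg]
    rw [qpoch_rev (u2+u3-((j+i:ℕ):ℝ)+1-v1+(j:ℝ)) i]
    rw [show (1:ℝ) - (u2+u3-((j+i:ℕ):ℝ)+1-v1+(j:ℝ)) - (i:ℝ) = v1-u2-u3 by push_cast; ring]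
    have hv1 : qpoch q (v1+(j:ℝ)) i * qpoch q ((v1+(j:ℝ))+(i:ℝ)) ((t-j)-i)
        = qpoch q (v1+(j:ℝ)) (t-j) := by
      rw [← qpoch_add, show i+((t-j)-i) = t-j from by omega]
    rw [show v1+((j+i:ℕ):ℝ) = (v1+(j:ℝ))+(i:ℝ) by push_cast; ring]
    rw [show -(t:ℝ)+(j:ℝ) = -(((t-j):ℕ):ℝ) by push_cast [Nat.cast_sub hjt]; ring]
    rw [show u1+1-(t:ℝ)-v2+((j+i:ℕ):ℝ) = (u1+1-(t:ℝ)-v2+(j:ℝ))+(i:ℝ) by push_cast; ring]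
    rw [show v1+v2-u2-u3+((j+i:ℕ):ℝ)
      = (u1+(j:ℝ))+(v1-u2-u3)-((t-j:ℕ):ℝ)+1-(u1+1-(t:ℝ)-v2+(j:ℝ))+(i:ℝ) by
        push_cast [Nat.cast_sub hjt]; ring]
    rw [← hv1]
    rw [pow_add]
    rcases Nat.even_or_odd j with hje | hje <;> rcases Nat.even_or_odd i with hie | hie <;>
      simp only [hje.neg_one_pow, hie.neg_one_pow] <;>
      linear_combination (qpoch q (-(t:ℝ)) j * qpoch q u1 j * qpoch q u2 j * qpoch q u3 j
          * (qpoch q (v1+(j:ℝ)) i * qpoch q ((v1+(j:ℝ))+(i:ℝ)) ((t-j)-i)) / qfact q j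
        * (qpoch q (-(((t-j):ℕ):ℝ)) i * qpoch q (u1+(j:ℝ)) i * qpoch q (v1-u2-u3) i
          * qpoch q ((u1+1-(t:ℝ)-v2+(j:ℝ)) + i) ((t-j)-i)
          * qpoch q ((u1+(j:ℝ)) + (v1-u2-u3) - ((t-j:ℕ):ℝ) + 1 - (u1+1-(t:ℝ)-v2+(j:ℝ)) + i)
              ((t-j)-i)
          / qfact q i)) * mul_inv_cancel₀ hFji
  rw [Finset.sum_congr rfl key_i, ← Finset.mul_sum,
    qPS hq0 hq1 (t-j) (u1+(j:ℝ)) (v1-u2-u3) (u1+1-(t:ℝ)-v2+(j:ℝ))]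
  rw [show u1+1-(t:ℝ)-v2+(j:ℝ) - (u1+(j:ℝ)) = 1-(t:ℝ)-v2 by ring]
  rw [show u1+1-(t:ℝ)-v2+(j:ℝ) - (v1-u2-u3) = u1+u2+u3+1-(t:ℝ)-v1-v2+(j:ℝ) by ring]
  rw [qpoch_rev (1-(t:ℝ)-v2) (t-j)]
  rw [show (1:ℝ) - (1-(t:ℝ)-v2) - ((t-j:ℕ):ℝ) = v2+(j:ℝ) by push_cast [Nat.cast_sub hjt]; ring]
  rcases Nat.even_or_odd (t-j) with htj | htj <;>
    simp only [htj.neg_one_pow] <;> ring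

lemma qpoch_ne_zero_neg {q : ℝ} (hq0 : 0 < q) (hq1 : q ≠ 1) {a : ℝ} {k : ℕ}
    (h : a + k ≤ 0) : qpoch q a k ≠ 0 := by
  unfold qpoch
  apply Finset.prod_ne_zero_iff.mpr
  intro m hm
  have hm' : (m:ℝ) < k := by exact_mod_cast Finset.mem_range.mp hm
  exact qnum_ne_zero hq0 hq1 (by nlinarith)

lemma qpoch_fact {q : ℝ} (hq0 : 0 < q) (hq1 : q ≠ 1) (c k : ℕ) :
    qpoch q ((c:ℝ)+1) k = qfact q (c+k) / qfact q c := by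
  rw [eq_div_iff (qfact_pos hq0 hq1 c).ne', qfact_add, mul_comm]

lemma qpoch_negnat_div {q : ℝ} (hq0 : 0 < q) (hq1 : q ≠ 1) {c k : ℕ} (h : k ≤ c) :
    qpoch q (-(c:ℝ)) k = (-1)^k * qfact q c / qfact q (c-k) := by
  rw [eq_div_iff (qfact_pos hq0 hq1 (c-k)).ne']
  exact qpoch_negnat h

lemma sum_trunc {f : ℕ → ℝ} {a b : ℕ} (hb : ∀ k, b < k → f k = 0) :
    ∑ k ∈ Finset.range (a+1), f k = ∑ k ∈ Finset.range (min a b + 1), f k := by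
  rcases le_total a b with h | h
  · rw [min_eq_left h]
  · rw [min_eq_right h]
    exact (Finset.sum_subset
      (by intro x hx; simp only [Finset.mem_range] at *; omega)
      (by intro x hx hx'
          simp only [Finset.mem_range] at *
          exact hb x (by omega))).symm


set_option maxHeartbeats 1600000 in
theorem stmt_17 (q : ℝ) (hq0 : 0 < q) (hq1 : q ≠ 1) (A N α β : ℕ) (hN : 1 ≤ N) (hβ : β ≤ A)
    (n t : ℕ) (hn : n < N) (ht : t < N) :
    racahUt q ((A : ℝ) / 2) ((A : ℝ) / 2 + N) (α : ℝ) (β : ℝ) (N - 1 - n)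
        ((A : ℝ) / 2 + t) =
      (-1 : ℝ) ^ ((t : ℤ) - (n : ℤ)) *
        (qfact q (t + β) * qfact q (N + α - t - 1) * qfact q (A + N + α + t) *
            qfact q (A + N - β - n - 1) /
          (qfact q (A - β + t) * qfact q (α + n) * qfact q (β + n) *
            qfact q (A + N + α + n))) *
        racahU q ((A : ℝ) / 2) ((A : ℝ) / 2 + N) (α : ℝ) (β : ℝ) n ((A : ℝ) / 2 + t) := by
  unfold racahU racahUt
  simp only [show (A:ℝ)/2 - ((A:ℝ)/2 + (N:ℝ)) + 1 = 1 - (N:ℝ) by ring,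
    show 2*((A:ℝ)/2) - (β:ℝ) + 1 = (A:ℝ) - (β:ℝ) + 1 by ring,
    show (A:ℝ)/2 - ((A:ℝ)/2 + (N:ℝ)) - (α:ℝ) + 1 = 1 - (N:ℝ) - (α:ℝ) by ring,
    show (A:ℝ)/2 - ((A:ℝ)/2 + (t:ℝ)) = -(t:ℝ) by ring,
    show (A:ℝ)/2 + ((A:ℝ)/2 + (t:ℝ)) + 1 = (A:ℝ) + (t:ℝ) + 1 by ring,
    show (A:ℝ)/2 + ((A:ℝ)/2 + (N:ℝ)) + (α:ℝ) + 1 = (A:ℝ) + (N:ℝ) + (α:ℝ) + 1 by ring,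
    show 2*((A:ℝ)/2) - 2*((A:ℝ)/2 + (N:ℝ)) - (α:ℝ) - (β:ℝ) + ((N-1-n : ℕ):ℝ) + 1
        = -(N:ℝ) - (α:ℝ) - (β:ℝ) - (n:ℝ) by
      rw [Nat.cast_sub (by omega : n ≤ N-1), Nat.cast_sub hN]; push_cast; ring]
  -- step 1: truncate both sums to range (t+1)
  have htR : (∑ x ∈ Finset.range (n+1),
        qpoch q (-(n:ℝ)) x * qpoch q ((α:ℝ)+β+n+1) x * qpoch q (-(t:ℝ)) x * qpoch q ((A:ℝ)+t+1) x /
          (qpoch q 1 x * qpoch q (1-(N:ℝ)) x * qpoch q ((β:ℝ)+1) x * qpoch q ((A:ℝ)+N+α+1) x))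
      = ∑ x ∈ Finset.range (t+1),
        qpoch q (-(n:ℝ)) x * qpoch q ((α:ℝ)+β+n+1) x * qpoch q (-(t:ℝ)) x * qpoch q ((A:ℝ)+t+1) x /
          (qpoch q 1 x * qpoch q (1-(N:ℝ)) x * qpoch q ((β:ℝ)+1) x * qpoch q ((A:ℝ)+N+α+1) x) := by
    rw [sum_trunc (b := t) (fun k hk => by rw [qpoch_nat_zero hk]; ring)]
    conv_rhs => rw [sum_trunc (b := n) (fun k hk => by rw [qpoch_nat_zero hk]; ring)]
    rw [min_comm]
  have htL : (∑ x ∈ Finset.range (N-1-n+1),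
        qpoch q (-((N-1-n:ℕ):ℝ)) x * qpoch q (-(N:ℝ)-α-β-n) x * qpoch q (-(t:ℝ)) x * qpoch q ((A:ℝ)+t+1) x /
          (qpoch q 1 x * qpoch q (1-(N:ℝ)) x * qpoch q ((A:ℝ)-β+1) x * qpoch q (1-(N:ℝ)-α) x))
      = ∑ x ∈ Finset.range (t+1),
        qpoch q (-((N-1-n:ℕ):ℝ)) x * qpoch q (-(N:ℝ)-α-β-n) x * qpoch q (-(t:ℝ)) x * qpoch q ((A:ℝ)+t+1) x /
          (qpoch q 1 x * qpoch q (1-(N:ℝ)) x * qpoch q ((A:ℝ)-β+1) x * qpoch q (1-(N:ℝ)-α) x) := by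
    rw [sum_trunc (b := t) (fun k hk => by rw [qpoch_nat_zero hk]; ring)]
    conv_rhs => rw [sum_trunc (b := N-1-n) (fun k hk => by rw [qpoch_nat_zero hk]; ring)]
    rw [min_comm]
  rw [htR, htL]
  simp only [show -((N-1-n:ℕ):ℝ) = 1-(N:ℝ)+(n:ℝ) by
    rw [Nat.cast_sub (by omega : n ≤ N-1), Nat.cast_sub hN]; push_cast; ring]
  -- step 2: Sears instance, normalized
  have hQS := qSears hq0 hq1 t ((A:ℝ)+t+1) (-(n:ℝ)) ((α:ℝ)+β+n+1) (1-(N:ℝ)) ((β:ℝ)+1)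
  simp only [show ∀ z:ℝ, (A:ℝ)+t+1 + -(n:ℝ) + ((α:ℝ)+β+n+1) + 1 - t - (1-(N:ℝ)) - ((β:ℝ)+1) + z
      = (A:ℝ)+N+α+1+z from fun z => by push_cast; ring,
    show ∀ z:ℝ, (A:ℝ)+t+1+1-(t:ℝ)-((β:ℝ)+1)+z = (A:ℝ)-β+1+z from fun z => by ring,
    show ∀ z:ℝ, 1-(N:ℝ)+((β:ℝ)+1)- -(n:ℝ)-((α:ℝ)+β+n+1)+z = 1-(N:ℝ)-α+z from fun z => by ring,
    show (1:ℝ)-(N:ℝ) - -(n:ℝ) = 1-(N:ℝ)+(n:ℝ) by ring,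
    show (1:ℝ)-(N:ℝ) - ((α:ℝ)+β+n+1) = -(N:ℝ)-α-β-n by ring] at hQS
  simp only [← qfact_eq_qpoch]
  -- step 3: termwise clearing
  have hCRne1 : ∀ x : ℕ, x ≤ t → qpoch q (1-(N:ℝ)) x ≠ 0 := by
    intro x hx
    apply qpoch_ne_zero_neg hq0 hq1
    have hxN : x + 1 ≤ N := by omega
    have := (Nat.cast_le (α := ℝ)).mpr hxN
    push_cast at this; linarith
  have hCLne3 : ∀ x : ℕ, x ≤ t → qpoch q (1-(N:ℝ)-(α:ℝ)) x ≠ 0 := by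
    intro x hx
    apply qpoch_ne_zero_neg hq0 hq1
    have hxN : x + 1 ≤ N := by omega
    have := (Nat.cast_le (α := ℝ)).mpr hxN
    have hα : (0:ℝ) ≤ (α:ℕ) := Nat.cast_nonneg α
    push_cast at this; linarith
  have hAβ : (0:ℝ) < (A:ℝ)-(β:ℝ)+1 := by
    have := (Nat.cast_le (α := ℝ)).mpr hβ; linarith
  have htermR : ∀ x ∈ Finset.range (t+1),
      qpoch q (-(n:ℝ)) x * qpoch q ((α:ℝ)+β+n+1) x * qpoch q (-(t:ℝ)) x * qpoch q ((A:ℝ)+t+1) x /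
        (qfact q x * qpoch q (1-(N:ℝ)) x * qpoch q ((β:ℝ)+1) x * qpoch q ((A:ℝ)+N+α+1) x)
      = (qpoch q (-(t:ℝ)) x * qpoch q ((A:ℝ)+t+1) x * qpoch q (-(n:ℝ)) x * qpoch q ((α:ℝ)+β+n+1) x
          * qpoch q (1-(N:ℝ)+x) (t-x) * qpoch q ((β:ℝ)+1+x) (t-x) * qpoch q ((A:ℝ)+N+α+1+x) (t-x)
          / qfact q x)
        / (qpoch q (1-(N:ℝ)) t * qpoch q ((β:ℝ)+1) t * qpoch q ((A:ℝ)+N+α+1) t) := by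
    intro x hx
    have hxt : x ≤ t := by
      have := Finset.mem_range.mp hx; omega
    have hs1 : qpoch q (1-(N:ℝ)) x * qpoch q ((1-(N:ℝ))+x) (t-x) = qpoch q (1-(N:ℝ)) t := by
      rw [← qpoch_add, show x+(t-x) = t from by omega]
    have hs2 : qpoch q ((β:ℝ)+1) x * qpoch q (((β:ℝ)+1)+x) (t-x) = qpoch q ((β:ℝ)+1) t := by
      rw [← qpoch_add, show x+(t-x) = t from by omega]
    have hs3 : qpoch q ((A:ℝ)+N+α+1) x * qpoch q (((A:ℝ)+N+α+1)+x) (t-x)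
        = qpoch q ((A:ℝ)+N+α+1) t := by
      rw [← qpoch_add, show x+(t-x) = t from by omega]
    have hF : qfact q x ≠ 0 := (qfact_pos hq0 hq1 x).ne'
    have h1k := hCRne1 x hxt
    have h2k : qpoch q ((β:ℝ)+1) x ≠ 0 := (qpoch_pos hq0 hq1 (by positivity) x).ne'
    have h3k : qpoch q ((A:ℝ)+N+α+1) x ≠ 0 := (qpoch_pos hq0 hq1 (by positivity) x).ne'
    have h1t : qpoch q (1-(N:ℝ)+x) (t-x) ≠ 0 := by
      apply qpoch_ne_zero_neg hq0 hq1
      rw [Nat.cast_sub hxt]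
      have hxN : t + 1 ≤ N := by omega
      have := (Nat.cast_le (α := ℝ)).mpr hxN
      push_cast at this; linarith
    have h2t : qpoch q ((β:ℝ)+1+x) (t-x) ≠ 0 := (qpoch_pos hq0 hq1 (by positivity) _).ne'
    have h3t : qpoch q ((A:ℝ)+N+α+1+x) (t-x) ≠ 0 := (qpoch_pos hq0 hq1 (by positivity) _).ne'
    rw [← hs1, ← hs2, ← hs3]
    field_simp
  rw [Finset.sum_congr rfl htermR, ← Finset.sum_div]
  have htermL : ∀ x ∈ Finset.range (t+1),
      qpoch q (1-(N:ℝ)+n) x * qpoch q (-(N:ℝ)-α-β-n) x * qpoch q (-(t:ℝ)) x * qpoch q ((A:ℝ)+t+1) x /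
        (qfact q x * qpoch q (1-(N:ℝ)) x * qpoch q ((A:ℝ)-β+1) x * qpoch q (1-(N:ℝ)-α) x)
      = (qpoch q (-(t:ℝ)) x * qpoch q ((A:ℝ)+t+1) x * qpoch q (1-(N:ℝ)+n) x * qpoch q (-(N:ℝ)-α-β-n) x
          * qpoch q (1-(N:ℝ)+x) (t-x) * qpoch q ((A:ℝ)-β+1+x) (t-x) * qpoch q (1-(N:ℝ)-α+x) (t-x)
          / qfact q x)
        / (qpoch q (1-(N:ℝ)) t * qpoch q ((A:ℝ)-β+1) t * qpoch q (1-(N:ℝ)-α) t) := by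
    intro x hx
    have hxt : x ≤ t := by
      have := Finset.mem_range.mp hx; omega
    have hs1 : qpoch q (1-(N:ℝ)) x * qpoch q ((1-(N:ℝ))+x) (t-x) = qpoch q (1-(N:ℝ)) t := by
      rw [← qpoch_add, show x+(t-x) = t from by omega]
    have hs2 : qpoch q ((A:ℝ)-β+1) x * qpoch q (((A:ℝ)-β+1)+x) (t-x) = qpoch q ((A:ℝ)-β+1) t := by
      rw [← qpoch_add, show x+(t-x) = t from by omega]
    have hs3 : qpoch q (1-(N:ℝ)-α) x * qpoch q ((1-(N:ℝ)-α)+x) (t-x) = qpoch q (1-(N:ℝ)-α) t := by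
      rw [← qpoch_add, show x+(t-x) = t from by omega]
    have hF : qfact q x ≠ 0 := (qfact_pos hq0 hq1 x).ne'
    have h1k := hCRne1 x hxt
    have h2k : qpoch q ((A:ℝ)-β+1) x ≠ 0 := (qpoch_pos hq0 hq1 hAβ x).ne'
    have h3k := hCLne3 x hxt
    have h1t : qpoch q (1-(N:ℝ)+x) (t-x) ≠ 0 := by
      apply qpoch_ne_zero_neg hq0 hq1
      rw [Nat.cast_sub hxt]
      have hxN : t + 1 ≤ N := by omega
      have := (Nat.cast_le (α := ℝ)).mpr hxN
      push_cast at this; linarith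
    have h2t : qpoch q ((A:ℝ)-β+1+x) (t-x) ≠ 0 := (qpoch_pos hq0 hq1 (by positivity) _).ne'
    have h3t : qpoch q (1-(N:ℝ)-α+x) (t-x) ≠ 0 := by
      apply qpoch_ne_zero_neg hq0 hq1
      rw [Nat.cast_sub hxt]
      have hxN : t + 1 ≤ N := by omega
      have := (Nat.cast_le (α := ℝ)).mpr hxN
      have hα : (0:ℝ) ≤ (α:ℕ) := Nat.cast_nonneg α
      push_cast at this; linarith
    rw [← hs1, ← hs2, ← hs3]
    field_simp
  rw [Finset.sum_congr rfl htermL, ← Finset.sum_div]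
  rw [← hQS]
  set S := (∑ x ∈ Finset.range (t+1),
    qpoch q (-(t:ℝ)) x * qpoch q ((A:ℝ)+t+1) x * qpoch q (-(n:ℝ)) x * qpoch q ((α:ℝ)+β+n+1) x
      * qpoch q (1-(N:ℝ)+x) (t-x) * qpoch q ((β:ℝ)+1+x) (t-x) * qpoch q ((A:ℝ)+N+α+1+x) (t-x)
      / qfact q x) with hS
  clear hQS htR htL htermR htermL hCRne1 hCLne3 hAβ
  -- step 4: prefactor identity
  have h1 : qpoch q (1-(N:ℝ)) (N-1-n) = (-1)^(N-1-n) * qfact q (N-1) / qfact q n := by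
    rw [show (1:ℝ)-(N:ℝ) = -((N-1:ℕ):ℝ) by rw [Nat.cast_sub hN]; push_cast; ring,
      qpoch_negnat_div hq0 hq1 (show N-1-n ≤ N-1 by omega),
      show N-1-(N-1-n) = n from by omega]
  have h2 : qpoch q ((A:ℝ)-β+1) (N-1-n) = qfact q (A+N-β-n-1) / qfact q (A-β) := by
    rw [show (A:ℝ)-(β:ℝ)+1 = ((A-β:ℕ):ℝ)+1 by rw [Nat.cast_sub hβ],
      qpoch_fact hq0 hq1, show (A-β)+(N-1-n) = A+N-β-n-1 from by omega]
  have h3 : qpoch q (1-(N:ℝ)-α) (N-1-n) = (-1)^(N-1-n) * qfact q (N+α-1) / qfact q (α+n) := by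
    rw [show (1:ℝ)-(N:ℝ)-(α:ℝ) = -((N+α-1:ℕ):ℝ) by
        rw [Nat.cast_sub (by omega : 1 ≤ N+α)]; push_cast; ring,
      qpoch_negnat_div hq0 hq1 (show N-1-n ≤ N+α-1 by omega),
      show N+α-1-(N-1-n) = α+n from by omega]
  have h4 : qpoch q (1-(N:ℝ)) t = (-1)^t * qfact q (N-1) / qfact q (N-1-t) := by
    rw [show (1:ℝ)-(N:ℝ) = -((N-1:ℕ):ℝ) by rw [Nat.cast_sub hN]; push_cast; ring,
      qpoch_negnat_div hq0 hq1 (show t ≤ N-1 by omega)]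
  have h5 : qpoch q ((A:ℝ)-β+1) t = qfact q (A-β+t) / qfact q (A-β) := by
    rw [show (A:ℝ)-(β:ℝ)+1 = ((A-β:ℕ):ℝ)+1 by rw [Nat.cast_sub hβ],
      qpoch_fact hq0 hq1]
  have h6 : qpoch q (1-(N:ℝ)-α) t = (-1)^t * qfact q (N+α-1) / qfact q (N+α-t-1) := by
    rw [show (1:ℝ)-(N:ℝ)-(α:ℝ) = -((N+α-1:ℕ):ℝ) by
        rw [Nat.cast_sub (by omega : 1 ≤ N+α)]; push_cast; ring,
      qpoch_negnat_div hq0 hq1 (show t ≤ N+α-1 by omega),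
      show N+α-1-t = N+α-t-1 from by omega]
  have h7 : qpoch q (1-(N:ℝ)) n = (-1)^n * qfact q (N-1) / qfact q (N-1-n) := by
    rw [show (1:ℝ)-(N:ℝ) = -((N-1:ℕ):ℝ) by rw [Nat.cast_sub hN]; push_cast; ring,
      qpoch_negnat_div hq0 hq1 (show n ≤ N-1 by omega)]
  have h8 : qpoch q ((β:ℝ)+1) n = qfact q (β+n) / qfact q β := qpoch_fact hq0 hq1 β n
  have h9 : qpoch q ((A:ℝ)+N+α+1) n = qfact q (A+N+α+n) / qfact q (A+N+α) := by
    rw [show (A:ℝ)+(N:ℝ)+(α:ℝ)+1 = ((A+N+α:ℕ):ℝ)+1 by push_cast; ring,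
      qpoch_fact hq0 hq1]
  have h10 : qpoch q ((β:ℝ)+1) t = qfact q (t+β) / qfact q β := by
    rw [qpoch_fact hq0 hq1 β t, show β+t = t+β from by omega]
  have h11 : qpoch q ((A:ℝ)+N+α+1) t = qfact q (A+N+α+t) / qfact q (A+N+α) := by
    rw [show (A:ℝ)+(N:ℝ)+(α:ℝ)+1 = ((A+N+α:ℕ):ℝ)+1 by push_cast; ring,
      qpoch_fact hq0 hq1]
  have hsign : (-1:ℝ)^((t:ℤ)-(n:ℤ)) = (-1)^t * (-1)^n := by
    rw [zpow_sub₀ (by norm_num : (-1:ℝ) ≠ 0), zpow_natCast, zpow_natCast]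
    rcases Nat.even_or_odd n with h | h <;> simp [h.neg_one_pow] <;> ring
  rw [h1, h2, h3, h4, h5, h6, h7, h8, h9, h10, h11, hsign]
  have f1 : qfact q n ≠ 0 := (qfact_pos hq0 hq1 _).ne'
  have f2 : qfact q (N-1) ≠ 0 := (qfact_pos hq0 hq1 _).ne'
  have f3 : qfact q (A+N-β-n-1) ≠ 0 := (qfact_pos hq0 hq1 _).ne'
  have f4 : qfact q (A-β) ≠ 0 := (qfact_pos hq0 hq1 _).ne'
  have f5 : qfact q (N+α-1) ≠ 0 := (qfact_pos hq0 hq1 _).ne'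
  have f6 : qfact q (α+n) ≠ 0 := (qfact_pos hq0 hq1 _).ne'
  have f7 : qfact q (N-1-t) ≠ 0 := (qfact_pos hq0 hq1 _).ne'
  have f8 : qfact q (A-β+t) ≠ 0 := (qfact_pos hq0 hq1 _).ne'
  have f9 : qfact q (N+α-t-1) ≠ 0 := (qfact_pos hq0 hq1 _).ne'
  have f10 : qfact q (N-1-n) ≠ 0 := (qfact_pos hq0 hq1 _).ne'
  have f11 : qfact q β ≠ 0 := (qfact_pos hq0 hq1 _).ne'
  have f12 : qfact q (β+n) ≠ 0 := (qfact_pos hq0 hq1 _).ne'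
  have f13 : qfact q (A+N+α) ≠ 0 := (qfact_pos hq0 hq1 _).ne'
  have f14 : qfact q (A+N+α+n) ≠ 0 := (qfact_pos hq0 hq1 _).ne'
  have f15 : qfact q (t+β) ≠ 0 := (qfact_pos hq0 hq1 _).ne'
  have f16 : qfact q (A+N+α+t) ≠ 0 := (qfact_pos hq0 hq1 _).ne'
  have fS : qfact q (A+N+α+t) ≠ 0 := (qfact_pos hq0 hq1 _).ne'
  rcases Nat.even_or_odd t with hpt | hpt <;>
    rcases Nat.even_or_odd n with hpn | hpn <;>
      rcases Nat.even_or_odd (N-1-n) with hpm | hpm <;>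
        simp only [hpt.neg_one_pow, hpn.neg_one_pow, hpm.neg_one_pow] <;>
        (field_simp)
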